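/- There exists a continuous exactly 3-to-1 map from the closed unit interval onto the circle, but no such map can be written as a finite composition of maps each of which is exactly 2-to-1 or exactly 1-to-1. -/

import Mathlib

open Set Real

/-- zigzag generator on [1/2,1]: 1/4 ↗ 1 ↘ 1/4 ↗ 1 -/
noncomputable def Gz : ℝ → ℝ := fun t =>
  if t ≤ 2/3 then 1/4 + 9/2 * (t - 1/2)
  else if t ≤ 5/6 then 1 - 9/2 * (t - 2/3)
  else 1/4 + 9/2 * (t - 5/6)

lemma Gz_cont : Continuous Gz := by
  unfold Gz
  apply Continuous.if_le
  · fun_prop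
  · apply Continuous.if_le
    · fun_prop
    · fun_prop
    · fun_prop
    · fun_prop
    · intro a ha; norm_num [ha]
  · fun_prop
  · fun_prop
  · intro a ha; norm_num [ha]

lemma Gz_mem {x : ℝ} (hx : x ∈ Icc (1/2 : ℝ) 1) : Gz x ∈ Icc (1/4 : ℝ) 1 := by
  obtain ⟨h1, h2⟩ := hx
  unfold Gz
  split_ifs with ha hb <;> constructor <;> linarith

lemma Gz_one : Gz 1 = 1 := by norm_num [Gz]

lemma Gz_half : Gz (1/2) = 1/4 := by norm_num [Gz]

/-- the self-similar map: h(t) = 4^(-n) Gz(2^n t) on (2^(-n-1), 2^(-n)] -/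
noncomputable def hz : ℝ → ℝ := fun t =>
  if t ≤ 0 then 0
  else (4 : ℝ) ^ (Int.clog 2 t) * Gz ((2 : ℝ) ^ (-(Int.clog 2 t)) * t)

lemma clog_eq_of {k : ℤ} {x : ℝ} (h1 : (2:ℝ) ^ (k-1) < x) (h2 : x ≤ (2:ℝ) ^ k) :
    Int.clog 2 x = k := by
  have hx : (0:ℝ) < x := lt_trans (zpow_pos (by norm_num) _) h1
  refine le_antisymm ?_ ?_
  · exact (Int.le_zpow_iff_clog_le (by norm_num) hx).1 (by exact_mod_cast h2)
  · have : (k - 1 : ℤ) < Int.clog 2 x :=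
      (Int.zpow_lt_iff_lt_clog (by norm_num) hx).1 (by exact_mod_cast h1)
    omega

lemma clog_bounds {x : ℝ} (hx : 0 < x) :
    (2:ℝ) ^ (Int.clog 2 x - 1) < x ∧ x ≤ (2:ℝ) ^ (Int.clog 2 x) := by
  constructor
  · have := Int.zpow_pred_clog_lt_self (b := 2) (r := x) (by norm_num) hx
    exact_mod_cast this
  · have := Int.self_le_zpow_clog (b := 2) (r := x) (by norm_num)
    exact_mod_cast this

lemma two_zpow_pred (k : ℤ) : (2:ℝ) ^ (k - 1) = (2:ℝ) ^ k / 2 := by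
  rw [zpow_sub₀ (by norm_num : (2:ℝ) ≠ 0), zpow_one]

lemma two_zpow_pos (k : ℤ) : (0:ℝ) < (2:ℝ) ^ k := zpow_pos (by norm_num) _
lemma four_zpow_pos (k : ℤ) : (0:ℝ) < (4:ℝ) ^ k := zpow_pos (by norm_num) _
lemma four_eq_two_two (k : ℤ) : (4:ℝ) ^ k = (2:ℝ) ^ k * (2:ℝ) ^ k := by
  rw [← mul_zpow]; norm_num
lemma two_zpow_le_one {k : ℤ} (hk : k ≤ 0) : (2:ℝ) ^ k ≤ 1 := by
  calc (2:ℝ) ^ k ≤ (2:ℝ) ^ (0:ℤ) := zpow_le_zpow_right₀ (by norm_num) hk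
    _ = 1 := by norm_num
lemma four_zpow_le_one {k : ℤ} (hk : k ≤ 0) : (4:ℝ) ^ k ≤ 1 := by
  calc (4:ℝ) ^ k ≤ (4:ℝ) ^ (0:ℤ) := zpow_le_zpow_right₀ (by norm_num) hk
    _ = 1 := by norm_num

lemma arg_mem {x : ℝ} (hx : 0 < x) :
    (2:ℝ) ^ (-(Int.clog 2 x)) * x ∈ Ioc (1/2 : ℝ) 1 := by
  obtain ⟨h1, h2⟩ := clog_bounds hx
  have hpow : (0:ℝ) < (2:ℝ) ^ (-(Int.clog 2 x)) := two_zpow_pos _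
  have hmul : (2:ℝ) ^ (-(Int.clog 2 x)) * (2:ℝ) ^ (Int.clog 2 x) = 1 := by
    rw [← zpow_add₀ (by norm_num : (2:ℝ) ≠ 0)]; norm_num
  constructor
  · have h3 : (2:ℝ) ^ (-(Int.clog 2 x)) * (2:ℝ) ^ (Int.clog 2 x - 1)
        < (2:ℝ) ^ (-(Int.clog 2 x)) * x := mul_lt_mul_of_pos_left h1 hpow
    have h4 : (2:ℝ) ^ (-(Int.clog 2 x)) * (2:ℝ) ^ (Int.clog 2 x - 1) = 1/2 := by
      rw [two_zpow_pred]
      field_simp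
      exact hmul
    linarith
  · have h3 : (2:ℝ) ^ (-(Int.clog 2 x)) * x
        ≤ (2:ℝ) ^ (-(Int.clog 2 x)) * (2:ℝ) ^ (Int.clog 2 x) :=
      mul_le_mul_of_nonneg_left h2 hpow.le
    linarith

lemma clog_nonpos_of {x : ℝ} (hx : 0 < x) (hx1 : x ≤ 1) : Int.clog 2 x ≤ 0 :=
  (Int.le_zpow_iff_clog_le (b := 2) (by norm_num) hx (x := 0)).1 (by norm_num [hx1])

lemma hz_pos_eq {x : ℝ} (hx : 0 < x) :
    hz x = (4 : ℝ) ^ (Int.clog 2 x) * Gz ((2 : ℝ) ^ (-(Int.clog 2 x)) * x) := by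
  simp [hz, not_le.2 hx]

lemma hz_bounds {x : ℝ} (hx : 0 < x) (hx1 : x ≤ 1) :
    0 < hz x ∧ hz x ≤ 1 ∧ hz x ≤ 4 * x ∧ (x ≤ 1/2 → hz x ≤ 1/4) := by
  have hk := clog_nonpos_of hx hx1
  have harg := arg_mem hx
  have hG := Gz_mem (Ioc_subset_Icc_self harg)
  have hG1 : 1/4 ≤ Gz ((2:ℝ) ^ (-(Int.clog 2 x)) * x) := hG.1
  have hG2 : Gz ((2:ℝ) ^ (-(Int.clog 2 x)) * x) ≤ 1 := hG.2
  have h4pos := four_zpow_pos (Int.clog 2 x)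
  have h41 := four_zpow_le_one hk
  have h2pos := two_zpow_pos (Int.clog 2 x)
  have h21 := two_zpow_le_one hk
  obtain ⟨hb1, hb2⟩ := clog_bounds hx
  have hpred := two_zpow_pred (Int.clog 2 x)
  have h2k2x : (2:ℝ) ^ (Int.clog 2 x) < 2 * x := by
    rw [hpred] at hb1; linarith
  have h4k := four_eq_two_two (Int.clog 2 x)
  rw [hz_pos_eq hx]
  refine ⟨?_, ?_, ?_, ?_⟩
  · positivity
  · nlinarith
  · nlinarith
  · intro hhalf
    have hk1 : Int.clog 2 x ≤ -1 := by
      have hm : Int.clog 2 x ≤ Int.clog 2 (1/2 : ℝ) := Int.clog_mono_right hx hhalf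
      have h12 : Int.clog 2 (1/2 : ℝ) = -1 := by
        apply clog_eq_of <;> norm_num
      omega
    have h44 : (4:ℝ) ^ (Int.clog 2 x) ≤ (4:ℝ) ^ (-1 : ℤ) :=
      zpow_le_zpow_right₀ (by norm_num) hk1
    norm_num at h44
    have hle := mul_le_mul_of_nonneg_left hG2 h4pos.le
    rw [mul_one] at hle
    exact le_trans hle h44

lemma hz_double {x : ℝ} (hx : 0 < x) : hz (2 * x) = 4 * hz x := by
  have h2x : 0 < 2 * x := by linarith
  obtain ⟨hb1, hb2⟩ := clog_bounds hx
  have hpred := two_zpow_pred (Int.clog 2 x)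
  have hclog2 : Int.clog 2 (2 * x) = Int.clog 2 x + 1 := by
    apply clog_eq_of
    · have he : (2:ℝ) ^ (Int.clog 2 x + 1 - 1) = (2:ℝ) ^ (Int.clog 2 x) := by norm_num
      rw [he]
      rw [hpred] at hb1
      linarith
    · have he : (2:ℝ) ^ (Int.clog 2 x + 1) = 2 * (2:ℝ) ^ (Int.clog 2 x) := by
        rw [zpow_add_one₀ (by norm_num : (2:ℝ) ≠ 0)]; ring
      rw [he]; linarith
  rw [hz_pos_eq hx, hz_pos_eq h2x, hclog2]
  have harg : (2:ℝ) ^ (-(Int.clog 2 x + 1)) * (2*x) = (2:ℝ) ^ (-(Int.clog 2 x)) * x := by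
    rw [neg_add, zpow_add₀ (by norm_num : (2:ℝ) ≠ 0)]
    have : (2:ℝ) ^ (-1:ℤ) = 1/2 := by norm_num
    rw [this]; ring
  rw [harg]
  have h4 : (4:ℝ) ^ (Int.clog 2 x + 1) = 4 * (4:ℝ) ^ (Int.clog 2 x) := by
    rw [zpow_add_one₀ (by norm_num : (4:ℝ) ≠ 0)]; ring
  rw [h4]; ring

lemma two_zpow_lt (a b : ℤ) (h : a < b) : (2:ℝ) ^ a < (2:ℝ) ^ b :=
  zpow_lt_zpow_right₀ (by norm_num) h

lemma hz_nonpos {x : ℝ} (hx : x ≤ 0) : hz x = 0 := by simp [hz, hx]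

lemma two_zpow_le_one' {k : ℤ} (hk : k ≤ 0) : (2:ℝ) ^ k ≤ 1 := by
  calc (2:ℝ) ^ k ≤ (2:ℝ) ^ (0:ℤ) := zpow_le_zpow_right₀ (by norm_num) hk
    _ = 1 := by norm_num

lemma hz_block (n : ℕ) {x : ℝ} (hx : x ∈ Icc ((2:ℝ)^(-(n:ℤ)-1)) ((2:ℝ)^(-(n:ℤ)))) :
    hz x = (4:ℝ)^(-(n:ℤ)) * Gz ((2:ℝ)^((n:ℤ)) * x) := by
  obtain ⟨h1, h2⟩ := hx
  have hxpos : 0 < x := lt_of_lt_of_le (two_zpow_pos _) h1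
  rcases eq_or_lt_of_le h1 with heq | hlt
  · have hclog : Int.clog 2 x = -(n:ℤ) - 1 := by
      apply clog_eq_of
      · rw [← heq]; exact two_zpow_lt _ _ (by omega)
      · rw [← heq]
    rw [hz_pos_eq hxpos, hclog, ← heq]
    have e1 : (2:ℝ) ^ (-(-(n:ℤ) - 1)) * (2:ℝ) ^ (-(n:ℤ)-1) = 1 := by
      rw [← zpow_add₀ (by norm_num : (2:ℝ) ≠ 0),
        show (-(-(n:ℤ) - 1)) + (-(n:ℤ)-1) = 0 by ring]
      norm_num
    have e2 : (2:ℝ) ^ ((n:ℤ)) * (2:ℝ) ^ (-(n:ℤ)-1) = 1/2 := by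
      rw [← zpow_add₀ (by norm_num : (2:ℝ) ≠ 0),
        show ((n:ℤ)) + (-(n:ℤ)-1) = -1 by ring]
      norm_num
    rw [e1, e2, Gz_one, Gz_half]
    have e3 : (4:ℝ) ^ (-(n:ℤ)-1) = (4:ℝ) ^ (-(n:ℤ)) / 4 := by
      rw [zpow_sub₀ (by norm_num : (4:ℝ) ≠ 0), zpow_one]
    rw [e3]; ring
  · have hclog : Int.clog 2 x = -(n:ℤ) := clog_eq_of hlt h2
    rw [hz_pos_eq hxpos, hclog, neg_neg]

lemma contOn_block (n : ℕ) :
    ContinuousOn hz (Icc ((2:ℝ)^(-(n:ℤ)-1)) ((2:ℝ)^(-(n:ℤ)))) :=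
  (Continuous.continuousOn
    (continuous_const.mul (Gz_cont.comp (continuous_const.mul continuous_id)))).congr
    (fun x hx => hz_block n hx)

lemma contOn_union_closed {f : ℝ → ℝ} {s t : Set ℝ} (hs : IsClosed s) (ht : IsClosed t)
    (hfs : ContinuousOn f s) (hft : ContinuousOn f t) : ContinuousOn f (s ∪ t) := by
  intro x hx
  have h1 : ContinuousWithinAt f s x := by
    by_cases hxs : x ∈ s
    · exact hfs x hxs
    · exact continuousWithinAt_of_notMem_closure (by rwa [hs.closure_eq])
  have h2 : ContinuousWithinAt f t x := by
    by_cases hxt : x ∈ t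
    · exact hft x hxt
    · exact continuousWithinAt_of_notMem_closure (by rwa [ht.closure_eq])
  exact h1.union h2

lemma contOn_tail (n : ℕ) : ContinuousOn hz (Icc ((2:ℝ)^(-(n:ℤ)-1)) 1) := by
  induction n with
  | zero =>
    have h := contOn_block 0
    have e : ((2:ℝ)^(-(0:ℕ):ℤ)) = 1 := by norm_num
    simpa [e] using h
  | succ n ih =>
    have hcast : (-(↑(n+1):ℤ)) = -(n:ℤ) - 1 := by push_cast; ring
    have hb := contOn_block (n+1)
    have hu : ContinuousOn hz (Icc ((2:ℝ)^(-(↑(n+1):ℤ))) 1) := by rw [hcast]; exact ih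
    have hle1 : (2:ℝ)^(-(↑(n+1):ℤ)-1) ≤ (2:ℝ)^(-(↑(n+1):ℤ)) :=
      le_of_lt (two_zpow_lt _ _ (by omega))
    have hle2 : (2:ℝ)^(-(↑(n+1):ℤ)) ≤ 1 := two_zpow_le_one' (by omega)
    have h := contOn_union_closed isClosed_Icc isClosed_Icc hb hu
    rwa [Icc_union_Icc_eq_Icc hle1 hle2] at h

lemma hz_contOn : ContinuousOn hz (Icc 0 1) := by
  intro x hx
  rcases eq_or_lt_of_le hx.1 with heq | hpos
  · -- x = 0
    rw [← heq]
    have h0 : hz 0 = 0 := hz_nonpos le_rfl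
    unfold ContinuousWithinAt
    rw [h0]
    apply squeeze_zero' (g := fun t => 4 * t)
    · apply eventually_nhdsWithin_of_forall
      intro t ht
      rcases le_or_gt t 0 with h | h
      · rw [hz_nonpos h]
      · exact (hz_bounds h ht.2).1.le
    · apply eventually_nhdsWithin_of_forall
      intro t ht
      rcases le_or_gt t 0 with h | h
      · rw [hz_nonpos h]; linarith [ht.1]
      · exact (hz_bounds h ht.2).2.2.1
    · have hT : Filter.Tendsto (fun t : ℝ => 4 * t) (nhds 0) (nhds 0) := by
        have hc : Continuous (fun t : ℝ => 4 * t) := continuous_const.mul continuous_id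
        have := hc.tendsto (0:ℝ)
        simpa using this
      exact hT.mono_left nhdsWithin_le_nhds
  · -- x > 0
    obtain ⟨n, hn⟩ := exists_pow_lt_of_lt_one hpos (by norm_num : (1/2:ℝ) < 1)
    have hlow : (2:ℝ)^(-(n:ℤ)-1) < x := by
      have e : ((1/2:ℝ))^n = (2:ℝ)^(-(n:ℤ)) := by
        rw [zpow_neg, ← inv_zpow, zpow_natCast]
        norm_num
      calc (2:ℝ)^(-(n:ℤ)-1) < (2:ℝ)^(-(n:ℤ)) := two_zpow_lt _ _ (by omega)
        _ = (1/2:ℝ)^n := e.symm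
        _ < x := hn
    have hcwa := (contOn_tail n) x ⟨hlow.le, hx.2⟩
    have hU : Ioi ((2:ℝ)^(-(n:ℤ)-1)) ∈ nhdsWithin x (Icc 0 1) :=
      mem_nhdsWithin_of_mem_nhds (isOpen_Ioi.mem_nhds hlow)
    have hsub : Icc (0:ℝ) 1 ∩ Ioi ((2:ℝ)^(-(n:ℤ)-1)) ⊆ Icc ((2:ℝ)^(-(n:ℤ)-1)) 1 :=
      fun y hy => ⟨le_of_lt hy.2, hy.1.2⟩
    exact (continuousWithinAt_inter' hU).1 (hcwa.mono hsub)

def Fib (c : ℝ) : Set ℝ := {x | x ∈ Ioc (0:ℝ) 1 ∧ hz x = c}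
def Uz (c : ℝ) : Set ℝ := {x | x ∈ Ioc (1/2:ℝ) 1 ∧ Gz x = c}

lemma hz_eq_Gz {x : ℝ} (hx : x ∈ Ioc (1/2:ℝ) 1) : hz x = Gz x := by
  have hpos : (0:ℝ) < x := lt_trans (by norm_num) hx.1
  have hclog : Int.clog 2 x = 0 := by
    apply clog_eq_of
    · norm_num; exact hx.1
    · norm_num; exact hx.2
  rw [hz_pos_eq hpos, hclog]
  norm_num

lemma Uz_eq {c : ℝ} (hc : c ∈ Ioo (1/4 : ℝ) 1) :
    Uz c = {1/2 + 2/9 * (c - 1/4), 2/3 + 2/9 * (1 - c), 5/6 + 2/9 * (c - 1/4)} := by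
  obtain ⟨hc1, hc2⟩ := hc
  ext x
  simp only [Uz, mem_setOf_eq, mem_Ioc, mem_insert_iff, mem_singleton_iff]
  constructor
  · rintro ⟨⟨hx1, hx2⟩, hGz⟩
    unfold Gz at hGz
    split_ifs at hGz with h1 h2
    · left; linarith
    · right; left; linarith
    · right; right; linarith
  · rintro (rfl | rfl | rfl)
    · refine ⟨⟨by linarith, by linarith⟩, ?_⟩
      unfold Gz
      rw [if_pos (by linarith)]
      ring
    · refine ⟨⟨by linarith, by linarith⟩, ?_⟩
      unfold Gz
      rw [if_neg (by linarith), if_pos (by linarith)]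
      ring
    · refine ⟨⟨by linarith, by linarith⟩, ?_⟩
      unfold Gz
      rw [if_neg (by linarith), if_neg (by linarith)]
      ring

lemma Uz_one : Uz 1 = {2/3, 1} := by
  ext x
  simp only [Uz, mem_setOf_eq, mem_Ioc, mem_insert_iff, mem_singleton_iff]
  constructor
  · rintro ⟨⟨hx1, hx2⟩, hGz⟩
    unfold Gz at hGz
    split_ifs at hGz with h1 h2
    · left; linarith
    · left; linarith
    · right; linarith
  · rintro (rfl | rfl)
    · exact ⟨⟨by norm_num, by norm_num⟩, by norm_num [Gz]⟩
    · exact ⟨⟨by norm_num, le_rfl⟩, by norm_num [Gz]⟩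

lemma Uz_quarter : Uz (1/4) = {5/6} := by
  ext x
  simp only [Uz, mem_setOf_eq, mem_Ioc, mem_singleton_iff]
  constructor
  · rintro ⟨⟨hx1, hx2⟩, hGz⟩
    unfold Gz at hGz
    split_ifs at hGz with h1 h2
    · linarith
    · linarith
    · linarith
  · rintro rfl
    refine ⟨⟨by norm_num, by norm_num⟩, ?_⟩
    unfold Gz
    rw [if_neg (by norm_num), if_pos (by norm_num)]
    ring

lemma Uz_empty {c : ℝ} (hc : c < 1/4 ∨ 1 < c) : Uz c = ∅ := by
  ext x
  simp only [Uz, mem_setOf_eq, mem_empty_iff_false, iff_false]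
  rintro ⟨hx, hGz⟩
  have := Gz_mem (Ioc_subset_Icc_self hx)
  rcases hc with h | h
  · have := this.1; rw [hGz] at this; linarith
  · have := this.2; rw [hGz] at this; linarith

lemma Fib_decomp (c : ℝ) : Fib c = Uz c ∪ (fun x => x / 2) '' Fib (4 * c) := by
  ext x
  simp only [Fib, Uz, mem_setOf_eq, mem_union, mem_image, mem_Ioc]
  constructor
  · rintro ⟨⟨hx1, hx2⟩, hhz⟩
    rcases le_or_gt x (1/2) with h | h
    · right
      refine ⟨2 * x, ⟨⟨by linarith, by linarith⟩, ?_⟩, by ring⟩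
      rw [hz_double hx1, hhz]
    · left
      refine ⟨⟨h, hx2⟩, ?_⟩
      rw [← hz_eq_Gz ⟨h, hx2⟩]; exact hhz
  · rintro (⟨⟨hx1, hx2⟩, hGz⟩ | ⟨y, ⟨⟨hy1, hy2⟩, hhz⟩, rfl⟩)
    · exact ⟨⟨by linarith, hx2⟩, by rw [hz_eq_Gz ⟨hx1, hx2⟩]; exact hGz⟩
    · refine ⟨⟨by linarith, by linarith⟩, ?_⟩
      have : hz (2 * (y / 2)) = 4 * hz (y / 2) := hz_double (by linarith)
      rw [show 2 * (y/2) = y by ring] at this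
      rw [hhz] at this
      linarith

lemma Fib_gt_one {c : ℝ} (hc : 1 < c) : Fib c = ∅ := by
  ext x
  simp only [Fib, mem_setOf_eq, mem_empty_iff_false, iff_false]
  rintro ⟨⟨hx1, hx2⟩, hhz⟩
  have := (hz_bounds hx1 hx2).2.1
  rw [hhz] at this
  linarith

lemma Fib_one : Fib 1 = {2/3, 1} := by
  rw [Fib_decomp, Uz_one, Fib_gt_one (by norm_num), Set.image_empty, Set.union_empty]

lemma ncard3 {a b c : ℝ} (hab : a ≠ b) (hac : a ≠ c) (hbc : b ≠ c) :
    ({a, b, c} : Set ℝ).ncard = 3 := by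
  rw [Set.ncard_insert_of_notMem (by simp [hab, hac]) (by
    exact Set.toFinite _), Set.ncard_pair hbc]

lemma Fib_card_base {c : ℝ} (h1 : (1/4:ℝ) ≤ c) (h2 : c < 1) : (Fib c).ncard = 3 := by
  rcases eq_or_lt_of_le h1 with heq | hlt
  · -- c = 1/4
    rw [← heq]
    rw [Fib_decomp, Uz_quarter, show (4:ℝ) * (1/4) = 1 by norm_num, Fib_one]
    have himg : (fun x : ℝ => x / 2) '' {2/3, 1} = {1/3, 1/2} := by
      rw [Set.image_insert_eq, Set.image_singleton]
      norm_num
    rw [himg]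
    have : ({5/6, 1/3, 1/2} : Set ℝ) = {5/6} ∪ {1/3, 1/2} := rfl
    rw [← this]
    apply ncard3 <;> norm_num
  · rw [Fib_decomp, Fib_gt_one (by linarith), Set.image_empty, Set.union_empty,
      Uz_eq ⟨hlt, h2⟩]
    apply ncard3 <;> [skip; skip; skip] <;> intro heq <;> nlinarith [heq]

lemma zpow_four_neg_le {m : ℕ} : ((4:ℝ) ^ (-(m:ℤ)) : ℝ) ≤ 1 := by
  calc (4:ℝ) ^ (-(m:ℤ)) ≤ (4:ℝ) ^ (0:ℤ) := zpow_le_zpow_right₀ (by norm_num) (by omega)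
    _ = 1 := by norm_num

lemma four_zpow_pos' (k : ℤ) : (0:ℝ) < (4:ℝ) ^ k := zpow_pos (by norm_num) _

lemma Fib_card (m : ℕ) : ∀ c : ℝ, (4:ℝ)^(-(m:ℤ)-1) ≤ c → c < (4:ℝ)^(-(m:ℤ)) →
    (Fib c).ncard = 3 := by
  induction m with
  | zero =>
    intro c h1 h2
    norm_num at h1 h2
    exact Fib_card_base h1 h2
  | succ m ih =>
    intro c h1 h2
    have hc4 : (4:ℝ)^(-(m:ℤ)-1) ≤ 4 * c ∧ 4 * c < (4:ℝ)^(-(m:ℤ)) := by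
      constructor
      · have e : (4:ℝ)^(-(↑(m+1):ℤ)-1) = (4:ℝ)^(-(m:ℤ)-1) / 4 := by
          rw [show (-(↑(m+1):ℤ)-1) = (-(m:ℤ)-1) - 1 by push_cast; ring,
            zpow_sub₀ (by norm_num : (4:ℝ) ≠ 0), zpow_one]
        rw [e] at h1; linarith
      · have e : (4:ℝ)^(-(↑(m+1):ℤ)) = (4:ℝ)^(-(m:ℤ)) / 4 := by
          rw [show (-(↑(m+1):ℤ)) = (-(m:ℤ)) - 1 by push_cast; ring,
            zpow_sub₀ (by norm_num : (4:ℝ) ≠ 0), zpow_one]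
        rw [e] at h2; linarith
    have hcsmall : c < 1/4 := by
      have hh : 4 * c < 1 := lt_of_lt_of_le hc4.2 zpow_four_neg_le
      linarith
    have hUz : Uz c = ∅ := Uz_empty (Or.inl hcsmall)
    rw [Fib_decomp, hUz, Set.empty_union]
    rw [Set.ncard_image_of_injective _ (fun a b hab => by
      have : a / 2 = b / 2 := hab
      linarith)]
    exact ih (4*c) hc4.1 hc4.2

lemma exists_scale {c : ℝ} (h0 : 0 < c) (h1 : c < 1) :
    ∃ m : ℕ, (4:ℝ)^(-(m:ℤ)-1) ≤ c ∧ c < (4:ℝ)^(-(m:ℤ)) := by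
  have hP : ∃ n : ℕ, (4:ℝ)^(-(n:ℤ)-1) ≤ c := by
    obtain ⟨n, hn⟩ := exists_pow_lt_of_lt_one h0 (by norm_num : (1/4:ℝ) < 1)
    refine ⟨n, ?_⟩
    have e : ((1/4:ℝ))^n = (4:ℝ)^(-(n:ℤ)) := by
      rw [zpow_neg, ← inv_zpow, zpow_natCast]
      norm_num
    have hlt : (4:ℝ)^(-(n:ℤ)-1) < (4:ℝ)^(-(n:ℤ)) :=
      zpow_lt_zpow_right₀ (by norm_num) (by omega)
    rw [e] at hn
    linarith
  classical
  let m := Nat.find hP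
  refine ⟨m, Nat.find_spec hP, ?_⟩
  rcases Nat.eq_zero_or_pos m with hm0 | hmpos
  · rw [hm0]
    calc c < 1 := h1
      _ = (4:ℝ)^(-(0:ℕ):ℤ) := by norm_num
  · have hmin := Nat.find_min hP (m := m - 1) (by omega)
    push_neg at hmin
    have e : (-(↑(m-1):ℤ)-1) = -(m:ℤ) := by
      have : (↑(m-1):ℤ) = (m:ℤ) - 1 := by
        have := hmpos
        omega
      rw [this]; ring
    rw [e] at hmin
    exact hmin

lemma Fib_card_all {c : ℝ} (h0 : 0 < c) (h1 : c < 1) : (Fib c).ncard = 3 := by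
  obtain ⟨m, hm1, hm2⟩ := exists_scale h0 h1
  exact Fib_card m c hm1 hm2

noncomputable def fz : unitInterval → Circle := fun t => Circle.exp (2 * π * hz t)

lemma fz_cont : Continuous fz := by
  apply Circle.exp.continuous.comp
  exact continuous_const.mul hz_contOn.restrict

lemma hz_mem01 (t : unitInterval) : 0 ≤ hz t ∧ hz t ≤ 1 := by
  rcases eq_or_lt_of_le t.2.1 with heq | hpos
  · rw [← heq, hz_nonpos le_rfl]; norm_num
  · have := hz_bounds hpos t.2.2
    exact ⟨this.1.le, this.2.1⟩

lemma fz_eq_iff (t : unitInterval) (c : ℝ) :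
    fz t = Circle.exp (2 * π * c) ↔ ∃ m : ℤ, hz t = c + m := by
  rw [fz, Circle.exp_eq_exp]
  constructor
  · rintro ⟨m, hm⟩
    refine ⟨m, ?_⟩
    have hpi : (0:ℝ) < 2 * π := by positivity
    have : 2 * π * hz t = 2 * π * (c + m) := by rw [hm]; ring
    exact mul_left_cancel₀ (ne_of_gt hpi) this
  · rintro ⟨m, hm⟩
    exact ⟨m, by rw [hm]; ring⟩

lemma card_val_preimage (S : Set ℝ) (hS : S ⊆ Icc 0 1) :
    Nat.card ((Subtype.val : unitInterval → ℝ) ⁻¹' S) = S.ncard := by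
  rw [Nat.card_coe_set_eq]
  have himg : (Subtype.val : unitInterval → ℝ) '' (Subtype.val ⁻¹' S) = S := by
    apply Set.image_preimage_eq_of_subset
    rw [Subtype.range_coe]
    exact hS
  conv_rhs => rw [← himg]
  rw [Set.ncard_image_of_injective _ Subtype.val_injective]

lemma int_eq_zero_of {m : ℤ} (h1 : (-1:ℝ) < m) (h2 : (m:ℝ) < 1) : m = 0 := by
  have a1 : (-1:ℤ) < m := by exact_mod_cast h1
  have a2 : m < 1 := by exact_mod_cast h2
  omega

lemma fz_fiber_card (y : Circle) : Nat.card (fz ⁻¹' {y}) = 3 := by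
  set c := Int.fract (Complex.arg (y : ℂ) / (2 * π)) with hcdef
  have hc0 : 0 ≤ c := Int.fract_nonneg _
  have hc1 : c < 1 := Int.fract_lt_one _
  have hy : Circle.exp (2 * π * c) = y := by
    rw [← Circle.exp_arg y]
    apply Circle.exp_eq_exp.2
    refine ⟨-⌊Complex.arg (y:ℂ) / (2 * π)⌋, ?_⟩
    have hfr : c = Complex.arg (y:ℂ) / (2 * π) - ⌊Complex.arg (y:ℂ) / (2 * π)⌋ :=
      (Int.self_sub_floor _).symm
    have hpi : (2 * π) ≠ 0 := by positivity
    rw [hfr]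
    push_cast
    field_simp
    ring
  have hmem : ∀ t : unitInterval, t ∈ fz ⁻¹' {y} ↔ ∃ m : ℤ, hz t = c + m := by
    intro t
    rw [Set.mem_preimage, Set.mem_singleton_iff, ← hy, fz_eq_iff]
  rcases eq_or_lt_of_le hc0 with heq | hpos
  · -- c = 0 : fiber is {0, 2/3, 1}
    have hset : fz ⁻¹' {y} = (Subtype.val : unitInterval → ℝ) ⁻¹' ({0, 2/3, 1} : Set ℝ) := by
      ext t
      rw [hmem t]
      simp only [Set.mem_preimage, Set.mem_insert_iff, Set.mem_singleton_iff]
      constructor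
      · rintro ⟨m, hm⟩
        obtain ⟨hb0, hb1⟩ := hz_mem01 t
        rw [← heq] at hm
        rw [hm] at hb0 hb1
        norm_num at hb0 hb1
        have : m = 0 ∨ m = 1 := by
          have a1 : (0:ℤ) ≤ m := by exact_mod_cast hb0
          have a2 : m ≤ 1 := by exact_mod_cast hb1
          omega
        rcases this with rfl | rfl
        · -- hz t = 0, so t = 0
          left
          norm_num at hm
          by_contra htne
          have htpos : 0 < (t:ℝ) := lt_of_le_of_ne t.2.1 (Ne.symm htne)
          exact absurd hm (ne_of_gt (hz_bounds htpos t.2.2).1)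
        · -- hz t = 1
          right
          have h1 : hz t = 1 := by rw [hm]; norm_num
          have htpos : 0 < (t:ℝ) := by
            rcases eq_or_lt_of_le t.2.1 with he | hp
            · exfalso; rw [← he, hz_nonpos le_rfl] at h1; norm_num at h1
            · exact hp
          have : (t:ℝ) ∈ Fib 1 := ⟨⟨htpos, t.2.2⟩, h1⟩
          rw [Fib_one] at this
          simpa using this
      · rintro (h | h | h)
        · refine ⟨0, ?_⟩
          rw [← heq]
          push_cast
          rw [h, hz_nonpos le_rfl]
          norm_num
        · have : (2/3 : ℝ) ∈ Fib 1 := by rw [Fib_one]; simp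
          refine ⟨1, ?_⟩
          rw [← heq]
          push_cast
          rw [h, this.2]
          norm_num
        · have : (1 : ℝ) ∈ Fib 1 := by rw [Fib_one]; simp
          refine ⟨1, ?_⟩
          rw [← heq]
          push_cast
          rw [h, this.2]
          norm_num
    rw [hset, card_val_preimage _ (by intro x hx; rcases hx with h|h|h <;> rw [h] <;>
      constructor <;> norm_num)]
    apply ncard3 <;> norm_num
  · -- 0 < c < 1 : fiber is Fib c
    have hset : fz ⁻¹' {y} = (Subtype.val : unitInterval → ℝ) ⁻¹' (Fib c) := by
      ext t
      rw [hmem t]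
      simp only [Set.mem_preimage]
      constructor
      · rintro ⟨m, hm⟩
        obtain ⟨hb0, hb1⟩ := hz_mem01 t
        have hm0 : m = 0 := by
          apply int_eq_zero_of
          · rw [hm] at hb0; linarith
          · rw [hm] at hb1; linarith
        rw [hm0] at hm
        push_cast at hm
        rw [add_zero] at hm
        have htpos : 0 < (t:ℝ) := by
          rcases eq_or_lt_of_le t.2.1 with he | hp
          · exfalso; rw [← he, hz_nonpos le_rfl] at hm; linarith
          · exact hp
        exact ⟨⟨htpos, t.2.2⟩, hm⟩
      · rintro ⟨hmem', hhz⟩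
        exact ⟨0, by rw [hhz]; push_cast; ring⟩
    rw [hset, card_val_preimage _ (fun x hx => Ioc_subset_Icc_self hx.1)]
    exact Fib_card_all hpos hc1

lemma fz_surj : Function.Surjective fz := by
  intro y
  have h3 := fz_fiber_card y
  have hne : Nat.card (fz ⁻¹' {y}) ≠ 0 := by rw [h3]; norm_num
  have := (Nat.card_ne_zero.mp hne).1
  obtain ⟨t, ht⟩ := Set.nonempty_coe_sort.mp this
  exact ⟨t, ht⟩



/-- A map between compact metric spaces is a finite composition of maps each
of which is exactly 2-to-1 or exactly 1-to-1 (i.e. a continuous bijection):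
either it is itself such a map, or it is a composition of two such finite
compositions. -/
inductive IsCompOfTwoOrOneToOne :
    ∀ {X Y : Type} [MetricSpace X] [CompactSpace X] [MetricSpace Y] [CompactSpace Y],
      (X → Y) → Prop
  | base {X Y : Type} [MetricSpace X] [CompactSpace X] [MetricSpace Y] [CompactSpace Y]
      (f : X → Y) (hcont : Continuous f) (hsurj : Function.Surjective f)
      (hfib : (∀ y : Y, Nat.card (f ⁻¹' {y}) = 2) ∨ (∀ y : Y, Nat.card (f ⁻¹' {y}) = 1)) :
      IsCompOfTwoOrOneToOne f
  | comp {X Y Z : Type} [MetricSpace X] [CompactSpace X] [MetricSpace Y] [CompactSpace Y]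
      [MetricSpace Z] [CompactSpace Z] (g : Y → Z) (f : X → Y) :
      IsCompOfTwoOrOneToOne g → IsCompOfTwoOrOneToOne f → IsCompOfTwoOrOneToOne (g ∘ f)

theorem pow2_fibers :
    ∀ {X Y : Type} [MetricSpace X] [CompactSpace X] [MetricSpace Y] [CompactSpace Y]
      (f : X → Y), IsCompOfTwoOrOneToOne f → ∃ k : ℕ, ∀ y : Y, Nat.card (f ⁻¹' {y}) = 2 ^ k := by
  intro X₀ Y₀ _ _ _ _ f₀ hf₀
  induction hf₀ with
  | base f hcont hsurj hfib =>
    rcases hfib with h | h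
    · exact ⟨1, by simpa using h⟩
    · exact ⟨0, by simpa using h⟩
  | comp g f hg hf ihg ihf =>
    obtain ⟨kg, hkg⟩ := ihg
    obtain ⟨kf, hkf⟩ := ihf
    refine ⟨kg + kf, fun z => ?_⟩
    have hpre : (g ∘ f) ⁻¹' {z} = f ⁻¹' (g ⁻¹' {z}) := rfl
    rw [hpre]
    -- finiteness
    have hSfin : Finite (g ⁻¹' {z}) := by
      apply Nat.finite_of_card_ne_zero
      rw [hkg z]
      positivity
    have hFfin : ∀ y, Finite (f ⁻¹' {y}) := fun y => by
      apply Nat.finite_of_card_ne_zero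
      rw [hkf y]
      positivity
    -- equiv with sigma
    have e : (f ⁻¹' (g ⁻¹' {z})) ≃ (Σ y : g ⁻¹' {z}, f ⁻¹' {y.1}) :=
      { toFun := fun x => ⟨⟨f x.1, x.2⟩, ⟨x.1, rfl⟩⟩
        invFun := fun p => ⟨p.2.1, by
          have h1 : f p.2.1 = p.1.1 := p.2.2
          have h2 : g p.1.1 = z := p.1.2
          simp only [Set.mem_preimage, Set.mem_singleton_iff, h1, h2]⟩
        left_inv := fun x => rfl
        right_inv := fun p => by
          rcases p with ⟨⟨y, hy⟩, ⟨x, hx⟩⟩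
          simp only [Set.mem_preimage, Set.mem_singleton_iff] at hx
          subst hx
          rfl }
    rw [Nat.card_congr e]
    have : ∀ y : g ⁻¹' {z}, Finite (f ⁻¹' {y.1}) := fun y => hFfin y
    have hfint : Fintype (g ⁻¹' {z}) := Fintype.ofFinite _
    have hfib' : ∀ y : g ⁻¹' {z}, Fintype (f ⁻¹' {y.1}) := fun y => Fintype.ofFinite _
    rw [Nat.card_eq_fintype_card, Fintype.card_sigma]
    have : ∀ y : g ⁻¹' {z}, Fintype.card (f ⁻¹' {y.1}) = 2 ^ kf := by
      intro y
      rw [← Nat.card_eq_fintype_card, hkf]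
    rw [Finset.sum_congr rfl (fun y _ => this y)]
    rw [Finset.sum_const, Finset.card_univ, ← Nat.card_eq_fintype_card, hkg, smul_eq_mul,
      pow_add]


/-- There is a continuous exactly 3-to-1 map from the unit interval onto the
circle, but no such map is a finite composition of maps each of which is
exactly 2-to-1 or exactly 1-to-1. -/
theorem three_to_one_interval_onto_circle_not_comp :
    (∃ f : unitInterval → Circle, Continuous f ∧ Function.Surjective f ∧
        ∀ y : Circle, Nat.card (f ⁻¹' {y}) = 3) ∧
      ∀ f : unitInterval → Circle, Continuous f → Function.Surjective f →
        (∀ y : Circle, Nat.card (f ⁻¹' {y}) = 3) → ¬ IsCompOfTwoOrOneToOne f := by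
  constructor
  · exact ⟨fz, fz_cont, fz_surj, fz_fiber_card⟩
  · intro f hcont hsurj hfib hcomp
    obtain ⟨k, hk⟩ := pow2_fibers f hcomp
    have h3 := hfib 1
    have h2 := hk 1
    rw [h3] at h2
    rcases Nat.lt_or_ge k 2 with h | h
    · interval_cases k <;> omega
    · have hge : 2 ^ 2 ≤ 2 ^ k := Nat.pow_le_pow_right (by norm_num) h
      omega
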